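/- Let β be a real number with |β| < 1, let S be the shift operator on l²(ℤ, ℂ), and for ν ∈ ℝ with 2ν ∉ ℤ and T ∈ ℕ let g_{ν,T}(t) = e^{2πiνt}/√(2T+1) for −T ≤ t ≤ T and 0 otherwise. Then lim_{T→∞} Σ_{t∈ℤ} ((I − βS)^{−1} g_{ν,T})(t) · ((I − βS)^{−1} g_{ν,T})(t) = 0 (the bilinear sum without complex conjugation). -/

import Mathlib

open Filter

/-- The normalized complex wave `g_{ν,T}` of frequency `ν` on the window `[-T, T]`:
`g_{ν,T} t = e^{2πiνt} / √(2T+1)` for `-T ≤ t ≤ T` and `0` otherwise. -/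
noncomputable def waveWindow (ν : ℝ) (T : ℕ) : ℤ → ℂ :=
  fun t => if -(T : ℤ) ≤ t ∧ t ≤ (T : ℤ)
    then Complex.exp (2 * Real.pi * Complex.I * (ν : ℂ) * (t : ℂ)) / (Real.sqrt (2 * T + 1) : ℂ)
    else 0

/-- The von Neumann inverse `(I - βS)⁻¹ = ∑_{j ≥ 0} (βS)^j` applied to a complex
sequence `g`, where `S` is the shift `(S g) t = g (t + 1)`. -/
noncomputable def vonNeumannInvC (β : ℝ) (g : ℤ → ℂ) : ℤ → ℂ :=
  fun t => ∑' j : ℕ, (β : ℂ) ^ j * g (t + j)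

lemma geo_range_bound' {w : ℂ} (hw : ‖w‖ = 1) (hw1 : w ≠ 1) (n : ℕ) :
    ‖∑ i ∈ Finset.range n, w ^ i‖ ≤ 2 / ‖w - 1‖ := by
  have h0 : 0 < ‖w - 1‖ := by simpa [sub_eq_zero] using hw1
  rw [geom_sum_eq hw1, norm_div]
  gcongr
  calc ‖w ^ n - 1‖ ≤ ‖w ^ n‖ + ‖(1:ℂ)‖ := norm_sub_le _ _
    _ = 2 := by simp [norm_pow, hw]; norm_num

lemma geo_Icc_bound {w : ℂ} (hw : ‖w‖ = 1) (hw1 : w ≠ 1) (a b : ℤ) :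
    ‖∑ t ∈ Finset.Icc a b, w ^ t‖ ≤ 2 / ‖w - 1‖ := by
  have hw0 : w ≠ 0 := by intro h; simp [h] at hw
  have key : ∑ t ∈ Finset.Icc a b, w ^ t
      = w ^ a * ∑ i ∈ Finset.range (b + 1 - a).toNat, w ^ i := by
    rw [Finset.mul_sum]
    apply Finset.sum_nbij' (i := fun t => (t - a).toNat) (j := fun i => a + (i : ℤ))
    · intro t ht; simp only [Finset.mem_Icc] at ht; simp only [Finset.mem_range]; omega
    · intro i hi; simp only [Finset.mem_range] at hi; simp only [Finset.mem_Icc]; omega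
    · intro t ht; simp only [Finset.mem_Icc] at ht; omega
    · intro i hi; simp only [Finset.mem_range] at hi; omega
    · intro t ht
      simp only [Finset.mem_Icc] at ht
      rw [← zpow_natCast w ((t - a).toNat), ← zpow_add₀ hw0]
      congr 1; omega
  rw [key, norm_mul, norm_zpow, hw, one_zpow, one_mul]
  exact geo_range_bound' hw hw1 _

lemma wave_eq (ν : ℝ) (T : ℕ) (t : ℤ) :
    waveWindow ν T t = if -(T:ℤ) ≤ t ∧ t ≤ (T:ℤ) then
      (Complex.exp (2*Real.pi*Complex.I*(ν:ℂ))) ^ t * ((Real.sqrt (2*T+1) : ℝ) : ℂ)⁻¹ else 0 := by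
  unfold waveWindow
  split_ifs with h
  · rw [div_eq_mul_inv]
    congr 1
    rw [← Complex.exp_int_mul]
    congr 1; ring
  · rfl

lemma z_norm (ν : ℝ) : ‖Complex.exp (2*Real.pi*Complex.I*(ν:ℂ))‖ = 1 := by
  have : (2*(Real.pi:ℂ)*Complex.I*(ν:ℂ)) = ((2*Real.pi*ν : ℝ) : ℂ) * Complex.I := by
    push_cast; ring
  rw [this, Complex.norm_exp_ofReal_mul_I]

lemma w_ne_one (ν : ℝ) (hν : ∀ m : ℤ, 2 * ν ≠ (m : ℝ)) :
    (Complex.exp (2*Real.pi*Complex.I*(ν:ℂ))) ^ (2:ℕ) ≠ 1 := by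
  rw [← Complex.exp_nat_mul]
  push_cast
  intro h
  rw [Complex.exp_eq_one_iff] at h
  obtain ⟨n, hn⟩ := h
  have h2 : (2 * (Real.pi:ℂ) * Complex.I : ℂ) ≠ 0 := by
    simp [Real.pi_ne_zero, Complex.I_ne_zero, Complex.ofReal_ne_zero]
  have : ((2*ν : ℝ) : ℂ) = (n : ℂ) := by
    apply mul_left_cancel₀ h2
    push_cast at hn ⊢
    linear_combination hn
  exact hν n (by exact_mod_cast this)

set_option maxHeartbeats 1000000 in
lemma key_bound (β : ℝ) (hβ : |β| < 1) (ν : ℝ) (hν : ∀ m : ℤ, 2 * ν ≠ (m : ℝ)) (T : ℕ) :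
    ‖∑' t : ℤ, vonNeumannInvC β (waveWindow ν T) t * vonNeumannInvC β (waveWindow ν T) t‖ ≤
      ((1 - |β|)⁻¹ * (1 - |β|)⁻¹ *
        (2 / ‖(Complex.exp (2*Real.pi*Complex.I*(ν:ℂ))) ^ (2:ℕ) - 1‖)) * (2*(T:ℝ)+1)⁻¹ := by
  set z : ℂ := Complex.exp (2*Real.pi*Complex.I*(ν:ℂ)) with hzdef
  set w : ℂ := z ^ (2:ℕ) with hwdef
  set g : ℤ → ℂ := waveWindow ν T with hgdef
  set cR : ℝ := (Real.sqrt (2*T+1))⁻¹ with hcRdef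
  set c : ℂ := ((Real.sqrt (2*T+1) : ℝ) : ℂ)⁻¹ with hcdef
  have hz : ‖z‖ = 1 := z_norm ν
  have hz0 : z ≠ 0 := by intro h; rw [h] at hz; simp at hz
  have hwn : ‖w‖ = 1 := by rw [hwdef, norm_pow, hz, one_pow]
  have hw1 : w ≠ 1 := w_ne_one ν hν
  have hw10 : 0 < ‖w - 1‖ := by simpa [sub_eq_zero] using hw1
  have hK0 : 0 ≤ 2 / ‖w - 1‖ := by positivity
  have hβ0 : (0:ℝ) ≤ |β| := abs_nonneg β
  have hgeo : Summable (fun j : ℕ => |β| ^ j) := summable_geometric_of_lt_one hβ0 hβ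
  have hcR0 : 0 ≤ cR := by positivity
  have hcn : ‖c‖ = cR := by
    rw [hcdef, norm_inv, Complex.norm_real, Real.norm_eq_abs,
      abs_of_nonneg (Real.sqrt_nonneg _)]
  have hcsq : cR * cR = (2*(T:ℝ)+1)⁻¹ := by
    rw [hcRdef, ← mul_inv]
    congr 1
    rw [← Real.sqrt_mul_self (by positivity : (0:ℝ) ≤ 2*(T:ℝ)+1)]
    norm_num
  -- g basic facts
  have g_eval : ∀ s : ℤ, -(T:ℤ) ≤ s ∧ s ≤ (T:ℤ) → g s = z ^ s * c := by
    intro s hs; rw [hgdef, wave_eq, if_pos hs]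
  have g_zero : ∀ s : ℤ, ¬(-(T:ℤ) ≤ s ∧ s ≤ (T:ℤ)) → g s = 0 := by
    intro s hs; rw [hgdef, wave_eq, if_neg hs]
  have gnorm_le : ∀ s : ℤ, ‖g s‖ ≤ cR := by
    intro s
    by_cases hs : -(T:ℤ) ≤ s ∧ s ≤ (T:ℤ)
    · rw [g_eval s hs, norm_mul, norm_zpow, hz, one_zpow, one_mul, hcn]
    · rw [g_zero s hs, norm_zero]; exact hcR0
  -- the summand
  set a : ℤ → ℕ → ℂ := fun t j => ((β:ℝ):ℂ) ^ j * g (t + j) with hadef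
  have hanorm_eq : ∀ t j, ‖a t j‖ = |β| ^ j * ‖g (t + j)‖ := by
    intro t j
    rw [hadef]
    simp only [norm_mul, norm_pow, Complex.norm_real, Real.norm_eq_abs]
  have hanorm : ∀ t, Summable fun j => ‖a t j‖ := by
    intro t
    apply Summable.of_nonneg_of_le (fun j => norm_nonneg _) (fun j => ?_) (hgeo.mul_right cR)
    rw [hanorm_eq]
    exact mul_le_mul_of_nonneg_left (gnorm_le _) (by positivity)
  set F : ℤ → ℕ × ℕ → ℂ := fun t p => a t p.1 * a t p.2 with hFdef
  have step1 : ∀ t, vonNeumannInvC β g t * vonNeumannInvC β g t = ∑' p : ℕ × ℕ, F t p := by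
    intro t
    exact tsum_mul_tsum_of_summable_norm (hanorm t) (hanorm t)
  -- the support finsets
  set s : ℕ → ℕ → Finset ℤ := fun j k =>
    Finset.Icc (max (-(T:ℤ)-j) (-(T:ℤ)-k)) (min ((T:ℤ)-j) ((T:ℤ)-k)) with hsdef
  have hsupp : ∀ (j k : ℕ) (t : ℤ), t ∉ s j k → g (t + j) * g (t + k) = 0 := by
    intro j k t ht
    simp only [hsdef, Finset.mem_Icc, max_le_iff, le_min_iff] at ht
    push_neg at ht
    by_cases h1 : -(T:ℤ) ≤ t + j ∧ t + j ≤ (T:ℤ)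
    · by_cases h2 : -(T:ℤ) ≤ t + k ∧ t + k ≤ (T:ℤ)
      · exfalso
        obtain ⟨h1a, h1b⟩ := h1; obtain ⟨h2a, h2b⟩ := h2
        have := ht (by omega) (by omega)
        omega
      · rw [g_zero _ h2, mul_zero]
    · rw [g_zero _ h1, zero_mul]
  have hBval : ∀ j k : ℕ, ∑' t : ℤ, g (t + j) * g (t + k)
      = (c * c * (z ^ (j:ℤ) * z ^ (k:ℤ))) * ∑ t ∈ s j k, w ^ t := by
    intro j k
    rw [tsum_eq_sum (hsupp j k), Finset.mul_sum]
    apply Finset.sum_congr rfl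
    intro t ht
    simp only [hsdef, Finset.mem_Icc, max_le_iff, le_min_iff] at ht
    rw [g_eval (t + j) ⟨by omega, by omega⟩, g_eval (t + k) ⟨by omega, by omega⟩]
    have hwt : w ^ t = z ^ t * z ^ t := by
      rw [hwdef, show z ^ (2:ℕ) = z * z by ring, mul_zpow]
    rw [hwt, zpow_add₀ hz0, zpow_add₀ hz0]
    ring
  have hBbound : ∀ j k : ℕ, ‖∑' t : ℤ, g (t + j) * g (t + k)‖
      ≤ (2*(T:ℝ)+1)⁻¹ * (2 / ‖w - 1‖) := by
    intro j k
    rw [hBval j k]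
    simp only [norm_mul, norm_zpow, hz, one_zpow, hcn, mul_one, one_mul]
    rw [hcsq]
    exact mul_le_mul_of_nonneg_left (geo_Icc_bound hwn hw1 _ _) (by positivity)
  -- summability over the triple index
  have hu' : Summable (fun q : ℕ × ℤ => |β| ^ q.1 * ‖g (q.2 + q.1)‖) := by
    rw [summable_prod_of_nonneg (fun q => by positivity)]
    constructor
    · intro j
      apply summable_of_ne_finset_zero (s := Finset.Icc (-(T:ℤ)-j) ((T:ℤ)-j))
      intro t ht
      rw [Finset.mem_Icc] at ht
      rw [g_zero (t+j) (by omega), norm_zero, mul_zero]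
    · apply Summable.of_nonneg_of_le (fun j => tsum_nonneg fun t => by positivity)
        (fun j => ?_) (hgeo.mul_right ((2*(T:ℝ)+1) * cR))
      show ∑' (t:ℤ), |β| ^ j * ‖g (t + (j:ℤ))‖ ≤ _
      rw [tsum_mul_left]
      apply mul_le_mul_of_nonneg_left ?_ (by positivity)
      rw [tsum_eq_sum (s := Finset.Icc (-(T:ℤ)-j) ((T:ℤ)-j)) (fun t ht => by
        rw [Finset.mem_Icc] at ht; rw [g_zero (t+j) (by omega), norm_zero])]
      have hcard : (((Finset.Icc (-(T:ℤ)-j) ((T:ℤ)-j)).card : ℝ)) = 2*(T:ℝ)+1 := by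
        rw [Int.card_Icc]
        have h1 : ((T:ℤ) - j + 1 - (-(T:ℤ) - j)).toNat = 2*T+1 := by omega
        rw [h1]; push_cast; ring
      calc ∑ t ∈ Finset.Icc (-(T:ℤ)-j) ((T:ℤ)-j), ‖g (t+j)‖
          ≤ (Finset.Icc (-(T:ℤ)-j) ((T:ℤ)-j)).card • cR :=
            Finset.sum_le_card_nsmul _ _ _ (fun t _ => gnorm_le _)
        _ = ((Finset.Icc (-(T:ℤ)-j) ((T:ℤ)-j)).card : ℝ) * cR := nsmul_eq_mul _ _
        _ = (2*(T:ℝ)+1) * cR := by rw [hcard]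
  have hu : Summable (fun q : ℤ × ℕ => |β| ^ q.2 * ‖g (q.1 + q.2)‖) :=
    ((Equiv.prodComm ℤ ℕ).summable_iff).mpr hu'
  have hv : Summable (fun k : ℕ => |β| ^ k * cR) := hgeo.mul_right cR
  have hG' : Summable (fun q : (ℤ × ℕ) × ℕ =>
      (|β| ^ q.1.2 * ‖g (q.1.1 + q.1.2)‖) * (|β| ^ q.2 * cR)) :=
    hu.mul_of_nonneg hv (fun q => by positivity) (fun k => by positivity)
  have hG : Summable (fun q : ℤ × ℕ × ℕ =>
      (|β| ^ q.2.1 * ‖g (q.1 + q.2.1)‖) * (|β| ^ q.2.2 * cR)) :=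
    ((Equiv.prodAssoc ℤ ℕ ℕ).symm.summable_iff).mpr hG'
  have hFsum : Summable (Function.uncurry F) := by
    refine Summable.of_norm_bounded hG ?_
    rintro ⟨t, j, k⟩
    calc ‖a t j * a t k‖ = (|β|^j * ‖g (t+j)‖) * ‖a t k‖ := by rw [norm_mul, hanorm_eq]
      _ ≤ (|β|^j * ‖g (t+j)‖) * (|β|^k * cR) := by
          apply mul_le_mul_of_nonneg_left ?_ (by positivity)
          rw [hanorm_eq]
          exact mul_le_mul_of_nonneg_left (gnorm_le _) (by positivity)
  have step2 : ∑' t : ℤ, ∑' p : ℕ × ℕ, F t p = ∑' p : ℕ × ℕ, ∑' t : ℤ, F t p :=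
    (Summable.tsum_comm hFsum).symm
  have hinner_eq : ∀ p : ℕ × ℕ, ∑' t : ℤ, F t p
      = (((β:ℝ):ℂ) ^ p.1 * ((β:ℝ):ℂ) ^ p.2) * ∑' t : ℤ, g (t + p.1) * g (t + p.2) := by
    intro p
    rw [← tsum_mul_left]
    apply tsum_congr; intro t
    rw [hFdef, hadef]; ring
  have hinner_bound : ∀ p : ℕ × ℕ, ‖∑' t : ℤ, F t p‖
      ≤ |β| ^ p.1 * |β| ^ p.2 * ((2*(T:ℝ)+1)⁻¹ * (2 / ‖w - 1‖)) := by
    intro p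
    rw [hinner_eq p, norm_mul, norm_mul]
    simp only [norm_pow, Complex.norm_real, Real.norm_eq_abs]
    exact mul_le_mul_of_nonneg_left (hBbound p.1 p.2) (by positivity)
  have hMsum : Summable (fun p : ℕ × ℕ => |β| ^ p.1 * |β| ^ p.2) :=
    hgeo.mul_of_nonneg hgeo (fun j => by positivity) (fun k => by positivity)
  have hM : Summable (fun p : ℕ × ℕ =>
      |β| ^ p.1 * |β| ^ p.2 * ((2*(T:ℝ)+1)⁻¹ * (2 / ‖w - 1‖))) :=
    hMsum.mul_right _
  have hinner_summable : Summable (fun p : ℕ × ℕ => ‖∑' t : ℤ, F t p‖) :=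
    Summable.of_nonneg_of_le (fun p => norm_nonneg _) hinner_bound hM
  calc ‖∑' t : ℤ, vonNeumannInvC β g t * vonNeumannInvC β g t‖
      = ‖∑' p : ℕ × ℕ, ∑' t : ℤ, F t p‖ := by rw [← step2]; congr 1; exact tsum_congr step1
    _ ≤ ∑' p : ℕ × ℕ, ‖∑' t : ℤ, F t p‖ := norm_tsum_le_tsum_norm hinner_summable
    _ ≤ ∑' p : ℕ × ℕ, |β| ^ p.1 * |β| ^ p.2 * ((2*(T:ℝ)+1)⁻¹ * (2 / ‖w - 1‖)) :=
        Summable.tsum_le_tsum hinner_bound hinner_summable hM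
    _ = (∑' p : ℕ × ℕ, |β| ^ p.1 * |β| ^ p.2) * ((2*(T:ℝ)+1)⁻¹ * (2 / ‖w - 1‖)) :=
        tsum_mul_right
    _ = ((1 - |β|)⁻¹ * (1 - |β|)⁻¹ * (2 / ‖w - 1‖)) * (2*(T:ℝ)+1)⁻¹ := by
        rw [← Summable.tsum_mul_tsum hgeo hgeo hMsum, tsum_geometric_of_lt_one hβ0 hβ]
        ring


/-- For `|β| < 1` and `ν ∈ ℝ` with `2ν ∉ ℤ`, the bilinear sum
without complex conjugation vanishes in the limit:
`∑_t ((I - βS)⁻¹ g_{ν,T}) t ⬝ ((I - βS)⁻¹ g_{ν,T}) t → 0` as `T → ∞`. -/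
theorem stmt_16 (β : ℝ) (hβ : |β| < 1) (ν : ℝ) (hν : ∀ m : ℤ, 2 * ν ≠ (m : ℝ)) :
    Tendsto (fun T : ℕ =>
        ∑' t : ℤ, vonNeumannInvC β (waveWindow ν T) t * vonNeumannInvC β (waveWindow ν T) t)
      atTop (nhds (0 : ℂ)) := by
  apply squeeze_zero_norm (key_bound β hβ ν hν)
  have htop : Tendsto (fun T : ℕ => 2*(T:ℝ)+1) atTop atTop := by
    apply tendsto_atTop_add_const_right
    exact (tendsto_natCast_atTop_atTop).const_mul_atTop two_pos
  have h0 : Tendsto (fun T : ℕ => (2*(T:ℝ)+1)⁻¹) atTop (nhds 0) :=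
    tendsto_inv_atTop_zero.comp htop
  have := h0.const_mul ((1 - |β|)⁻¹ * (1 - |β|)⁻¹ *
    (2 / ‖(Complex.exp (2*Real.pi*Complex.I*(ν:ℂ))) ^ (2:ℕ) - 1‖))
  simpa using this
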